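/- arXiv:1707.00899 — 3 statements merged into one kernel-verified Lean document; each statement's English description precedes it below -/
import Mathlib

section
/- The Legendre–Fenchel transform I_3(x) = sup_{θ∈ℝ} {θx − log(1+3e^{2θ})} equals (x/2)·log(x/(6−3x)) − log(6/(6−3x)) for all x in the open interval (0,2). -/
open Real

theorem stmt2 (x : ℝ) (hx : x ∈ Set.Ioo (0:ℝ) 2) :
    (⨆ θ : ℝ, (θ * x - Real.log (1 + 3 * Real.exp (2 * θ)))) =
      x / 2 * Real.log (x / (6 - 3 * x)) - Real.log (6 / (6 - 3 * x)) := by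
  obtain ⟨hx0, hx2⟩ := hx
  have h2x : (0:ℝ) < 2 - x := by linarith
  have h6 : (0:ℝ) < 6 - 3 * x := by linarith
  set M : ℝ := x / 2 * Real.log (x / (6 - 3 * x)) - Real.log (6 / (6 - 3 * x)) with hM
  -- expand logs
  have e1 : Real.log (x / (6 - 3 * x)) = Real.log x - (Real.log 3 + Real.log (2 - x)) := by
    rw [Real.log_div (ne_of_gt hx0) (ne_of_gt h6),
      show (6 - 3*x) = 3 * (2 - x) by ring, Real.log_mul (by norm_num) (ne_of_gt h2x)]
  have e2 : Real.log (6 / (6 - 3 * x)) = Real.log 3 + Real.log 2 - (Real.log 3 + Real.log (2 - x)) := by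
    rw [Real.log_div (by norm_num) (ne_of_gt h6),
      show (6:ℝ) = 3 * 2 by norm_num, Real.log_mul (by norm_num) (by norm_num),
      show (3*2 - 3*x : ℝ) = 3 * (2 - x) by ring, Real.log_mul (by norm_num) (ne_of_gt h2x)]
  -- upper bound
  have hub : ∀ θ : ℝ, θ * x - Real.log (1 + 3 * Real.exp (2 * θ)) ≤ M := by
    intro θ
    have ht : (0:ℝ) < Real.exp (2 * θ) := Real.exp_pos _
    have hp : (0:ℝ) < x / 2 := by linarith
    have hq : (0:ℝ) < (2 - x) / 2 := by linarith
    have amgm := Real.geom_mean_le_arith_mean2_weighted (le_of_lt hq) (le_of_lt hp)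
      (le_of_lt (show (0:ℝ) < 2 / (2 - x) by positivity))
      (le_of_lt (show (0:ℝ) < 3 * Real.exp (2 * θ) / (x / 2) by positivity))
      (by ring)
    have hsum : (2 - x) / 2 * (2 / (2 - x)) + x / 2 * (3 * Real.exp (2 * θ) / (x / 2))
        = 1 + 3 * Real.exp (2 * θ) := by field_simp
    rw [hsum] at amgm
    have hlhs : (0:ℝ) < (2 / (2 - x)) ^ ((2 - x) / 2) * (3 * Real.exp (2 * θ) / (x / 2)) ^ (x / 2) := by
      positivity
    have hlog := Real.log_le_log hlhs amgm
    rw [Real.log_mul (ne_of_gt (by positivity)) (ne_of_gt (by positivity)),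
      Real.log_rpow (by positivity), Real.log_rpow (by positivity),
      Real.log_div (by norm_num) (ne_of_gt h2x),
      Real.log_div (ne_of_gt (by positivity)) (ne_of_gt hp),
      Real.log_mul (by norm_num) (ne_of_gt ht), Real.log_exp,
      Real.log_div (ne_of_gt hx0) (by norm_num)] at hlog
    rw [hM, e1, e2]
    nlinarith [hlog]
  have hbdd : BddAbove (Set.range fun θ : ℝ => θ * x - Real.log (1 + 3 * Real.exp (2 * θ))) := by
    refine ⟨M, ?_⟩
    rintro y ⟨θ, rfl⟩
    exact hub θ
  apply le_antisymm (ciSup_le hub)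
  -- lower bound: evaluate at θ₀
  set θ₀ : ℝ := Real.log (x / (6 - 3 * x)) / 2 with hθ₀
  have hexp : Real.exp (2 * θ₀) = x / (6 - 3 * x) := by
    rw [hθ₀, show 2 * (Real.log (x / (6 - 3 * x)) / 2) = Real.log (x / (6 - 3 * x)) by ring,
      Real.exp_log (by positivity)]
  have hval : θ₀ * x - Real.log (1 + 3 * Real.exp (2 * θ₀)) = M := by
    rw [hexp, show (1 + 3 * (x / (6 - 3 * x))) = 6 / (6 - 3 * x) by field_simp; ring, hM, hθ₀]
    ring
  calc M = θ₀ * x - Real.log (1 + 3 * Real.exp (2 * θ₀)) := hval.symm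
    _ ≤ _ := le_ciSup hbdd θ₀
end

section
/- Let a, b > 0 and let ξ ∈ (0, π/2) satisfy 2ξ² = a b² cos²ξ. Then the function g(x) = (1/b)·log(cos²ξ / cos²(ξ(x−1))) on [0,1] satisfies the Euler–Lagrange equation g''(x) = a·b·e^{b·g(x)} with boundary conditions g(0) = 0 and g'(1) = 0. -/
theorem stmt6 (a b ξ : ℝ) (ha : 0 < a) (hb : 0 < b)
    (hξ : ξ ∈ Set.Ioo 0 (Real.pi / 2)) (heq : 2 * ξ^2 = a * b^2 * (Real.cos ξ)^2)
    (g : ℝ → ℝ)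
    (hg : ∀ x, g x = (1/b) * Real.log ((Real.cos ξ)^2 / (Real.cos (ξ * (x - 1)))^2)) :
    g 0 = 0 ∧ deriv g 1 = 0 ∧
    ∀ x ∈ Set.Icc (0:ℝ) 1, deriv (deriv g) x = a * b * Real.exp (b * g x) := by
  obtain ⟨hξ0, hξπ⟩ := hξ
  have hc : 0 < Real.cos ξ := Real.cos_pos_of_mem_Ioo ⟨by linarith [Real.pi_pos], hξπ⟩
  set c := Real.cos ξ with hcdef
  -- the open set where everything is smooth
  set S : Set ℝ := (fun x => ξ * (x - 1)) ⁻¹' (Set.Ioo (-(Real.pi/2)) (Real.pi/2)) with hSdef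
  have hSopen : IsOpen S := by
    apply IsOpen.preimage (by fun_prop) isOpen_Ioo
  have hmemS : ∀ x ∈ Set.Icc (0:ℝ) 1, x ∈ S := by
    intro x hx
    obtain ⟨hx0, hx1⟩ := hx
    constructor
    · nlinarith
    · nlinarith [Real.pi_pos]
  have hcospos : ∀ x ∈ S, 0 < Real.cos (ξ * (x - 1)) := by
    intro x hx
    exact Real.cos_pos_of_mem_Ioo hx
  -- derivative of g on S
  have hderiv : ∀ x ∈ S, HasDerivAt g ((2*ξ/b) * Real.tan (ξ*(x-1))) x := by
    intro x hx
    have hcu : 0 < Real.cos (ξ*(x-1)) := hcospos x hx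
    have h1 : HasDerivAt (fun x : ℝ => ξ * (x - 1)) ξ x := by
      simpa using (((hasDerivAt_id x).sub_const 1).const_mul ξ)
    have h2 : HasDerivAt (fun x : ℝ => Real.cos (ξ*(x-1)))
        (-Real.sin (ξ*(x-1)) * ξ) x := by
      have := (Real.hasDerivAt_cos (ξ*(x-1))).comp x h1; exact this
    have h3 : HasDerivAt (fun x : ℝ => Real.log (Real.cos (ξ*(x-1))))
        ((Real.cos (ξ*(x-1)))⁻¹ * (-Real.sin (ξ*(x-1)) * ξ)) x :=
      by have := (Real.hasDerivAt_log hcu.ne').comp x h2; exact this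
    have hF : HasDerivAt (fun x : ℝ => (1/b) * (Real.log (c^2) -
        2 * Real.log (Real.cos (ξ*(x-1)))))
        ((1/b) * (0 - 2 * ((Real.cos (ξ*(x-1)))⁻¹ * (-Real.sin (ξ*(x-1)) * ξ)))) x := by
      exact ((hasDerivAt_const x (Real.log (c^2))).sub (h3.const_mul 2)).const_mul (1/b)
    have heq' : (fun x : ℝ => (1/b) * (Real.log (c^2) -
        2 * Real.log (Real.cos (ξ*(x-1))))) =ᶠ[nhds x] g := by
      filter_upwards [hSopen.mem_nhds hx] with y hy
      have hcy : 0 < Real.cos (ξ*(y-1)) := hcospos y hy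
      rw [hg y, Real.log_div (by positivity) (by positivity)]
      have : Real.log ((Real.cos (ξ*(y-1)))^2) = 2 * Real.log (Real.cos (ξ*(y-1))) := by
        rw [Real.log_pow]; push_cast; ring
      rw [this]
    have := hF.congr_of_eventuallyEq heq'.symm
    refine this.congr_deriv ?_
    rw [Real.tan_eq_sin_div_cos]
    field_simp
    ring
  refine ⟨?_, ?_, ?_⟩
  · rw [hg 0]
    have : ξ * (0 - 1) = -ξ := by ring
    rw [this, Real.cos_neg, div_self (by positivity), Real.log_one, mul_zero]
  · have h1S : (1:ℝ) ∈ S := hmemS 1 ⟨by norm_num, le_refl 1⟩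
    have := (hderiv 1 h1S).deriv
    rw [this]
    norm_num
  · intro x hx
    have hxS : x ∈ S := hmemS x hx
    have hcu : 0 < Real.cos (ξ*(x-1)) := hcospos x hxS
    -- deriv g agrees with tan formula near x
    have hEq : deriv g =ᶠ[nhds x] (fun y => (2*ξ/b) * Real.tan (ξ*(y-1))) := by
      filter_upwards [hSopen.mem_nhds hxS] with y hy
      exact (hderiv y hy).deriv
    rw [hEq.deriv_eq]
    have h1 : HasDerivAt (fun x : ℝ => ξ * (x - 1)) ξ x := by
      simpa using (((hasDerivAt_id x).sub_const 1).const_mul ξ)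
    have htan : HasDerivAt (fun y : ℝ => Real.tan (ξ*(y-1)))
        (1 / (Real.cos (ξ*(x-1)))^2 * ξ) x :=
      by have := (Real.hasDerivAt_tan hcu.ne').comp x h1; exact this
    have h2 : HasDerivAt (fun y : ℝ => (2*ξ/b) * Real.tan (ξ*(y-1)))
        ((2*ξ/b) * (1 / (Real.cos (ξ*(x-1)))^2 * ξ)) x := htan.const_mul _
    rw [h2.deriv]
    -- now compute the right-hand side
    have hgx : b * g x = Real.log (c^2 / (Real.cos (ξ*(x-1)))^2) := by
      rw [hg x]; field_simp
    rw [hgx, Real.exp_log (by positivity)]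
    field_simp
    nlinarith [sq_nonneg (Real.cos (ξ*(x-1))), heq]
end

section
/- Let (V_j)_{j≥1} be i.i.d. standard normal random variables and β, ε > 0. Define V_j^{(n)} = (n/√(2β))·log|1 + (√(2β)/n)V_j|. Then limsup_{n→∞} (1/n)·log P( Σ_{j=1}^n |V_j^{(n)} − V_j| ≥ nε ) = −∞. -/
open MeasureTheory ProbabilityTheory

lemma aux_log_abs_bound {x : ℝ} (hx : |x| < 1/2) :
    |Real.log |1 + x| - x| ≤ 2 * x^2 := by
  obtain ⟨hx1, hx2⟩ := abs_lt.1 hx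
  have h1 : (0:ℝ) < 1 + x := by linarith
  rw [abs_of_pos h1]
  have h2 : Real.log (1+x) ≤ x := by
    have := Real.log_le_sub_one_of_pos h1; linarith
  have h3 : Real.log (1+x)⁻¹ ≤ (1+x)⁻¹ - 1 :=
    Real.log_le_sub_one_of_pos (inv_pos.2 h1)
  rw [Real.log_inv] at h3
  have h5 : 1 - (1+x)⁻¹ ≤ Real.log (1+x) := by linarith
  have h6 : 1 - (1+x)⁻¹ = x / (1+x) := by field_simp; ring
  rw [abs_of_nonpos (by linarith)]
  have h7 : x - x/(1+x) = x^2/(1+x) := by field_simp; ring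
  have h8 : x^2/(1+x) ≤ 2*x^2 := by
    rw [div_le_iff₀ h1]; nlinarith [sq_nonneg x]
  rw [h6] at h5
  linarith

lemma aux_gaussian_pdf_smul (x : ℝ) :
    (Real.toNNReal (gaussianPDFReal 0 1 x)) • Real.exp ((1/4) * x^2)
      = (Real.sqrt (2*Real.pi))⁻¹ * Real.exp (-(1/4) * x^2) := by
  rw [NNReal.smul_def, Real.coe_toNNReal _ (gaussianPDFReal_nonneg 0 1 x), smul_eq_mul]
  unfold gaussianPDFReal
  simp only [NNReal.coe_one, mul_one, sub_zero]
  rw [mul_assoc, ← Real.exp_add]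
  congr 1
  ring

lemma aux_gaussianReal_withDensity :
    gaussianReal 0 1 = volume.withDensity
      (fun x => ((Real.toNNReal (gaussianPDFReal 0 1 x) : NNReal) : ENNReal)) := by
  rw [gaussianReal_of_var_ne_zero _ one_ne_zero]
  rfl

lemma aux_integrable_exp_quarter :
    Integrable (fun x : ℝ => Real.exp ((1/4) * x^2)) (gaussianReal 0 1) := by
  rw [aux_gaussianReal_withDensity,
    integrable_withDensity_iff_integrable_smul
      ((measurable_gaussianPDFReal 0 1).real_toNNReal)]
  have : (fun x : ℝ => (Real.toNNReal (gaussianPDFReal 0 1 x)) • Real.exp ((1/4) * x^2))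
      = fun x => (Real.sqrt (2*Real.pi))⁻¹ * Real.exp (-(1/4) * x^2) := by
    funext x; exact aux_gaussian_pdf_smul x
  rw [this]
  exact (integrable_exp_neg_mul_sq (by norm_num : (0:ℝ) < 1/4)).const_mul _

lemma aux_integral_exp_quarter :
    ∫ x, Real.exp ((1/4) * x^2) ∂(gaussianReal 0 1) = Real.sqrt 2 := by
  rw [aux_gaussianReal_withDensity,
    integral_withDensity_eq_integral_smul ((measurable_gaussianPDFReal 0 1).real_toNNReal)]
  have : (fun x : ℝ => (Real.toNNReal (gaussianPDFReal 0 1 x)) • Real.exp ((1/4) * x^2))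
      = fun x => (Real.sqrt (2*Real.pi))⁻¹ * Real.exp (-(1/4) * x^2) := by
    funext x; exact aux_gaussian_pdf_smul x
  rw [this, integral_const_mul, integral_gaussian]
  have hpi := Real.pi_pos
  have ha : (0:ℝ) < Real.sqrt (2*Real.pi) := Real.sqrt_pos.2 (by linarith)
  have ha2 : (Real.sqrt (2*Real.pi))^2 = 2*Real.pi := Real.sq_sqrt (by linarith)
  have hb : (0:ℝ) ≤ Real.sqrt (Real.pi/(1/4)) := Real.sqrt_nonneg _
  have hb2 : (Real.sqrt (Real.pi/(1/4)))^2 = 4*Real.pi := by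
    rw [Real.sq_sqrt (by positivity)]; ring
  have hs : (0:ℝ) ≤ Real.sqrt 2 := Real.sqrt_nonneg _
  have hs2 : (Real.sqrt 2)^2 = 2 := Real.sq_sqrt (by norm_num)
  rw [inv_mul_eq_div, div_eq_iff (ne_of_gt ha)]
  nlinarith [sq_nonneg (Real.sqrt (Real.pi/(1/4)) - Real.sqrt 2 * Real.sqrt (2*Real.pi)),
    mul_nonneg hs ha.le]

theorem stmt14 {Ω : Type*} [MeasurableSpace Ω] (P : Measure Ω) [IsProbabilityMeasure P]
    (V : ℕ → Ω → ℝ) (hmeas : ∀ j, Measurable (V j))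
    (hindep : iIndepFun V P)
    (hdist : ∀ j, Measure.map (V j) P = gaussianReal 0 1)
    (β ε : ℝ) (hβ : 0 < β) (hε : 0 < ε) :
    ∀ M > 0, ∃ N : ℕ, ∀ n ≥ N,
      P {x | (n:ℝ) * ε ≤ ∑ j ∈ Finset.range n,
          |(n:ℝ) / Real.sqrt (2*β) *
            Real.log |1 + Real.sqrt (2*β) / (n:ℝ) * V j x| - V j x|}
        ≤ ENNReal.ofReal (Real.exp (-M * n)) := by
  intro M hM
  set c := Real.sqrt (2*β) with hc_def
  have hc : 0 < c := Real.sqrt_pos.2 (by linarith)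
  set K := min (ε/(2*c)) (1/(4*c^2)) with hK_def
  have hK : 0 < K := lt_min (by positivity) (by positivity)
  set L := Real.log (Real.sqrt 2) with hL_def
  -- squared variables
  set W : ℕ → Ω → ℝ := fun j x => (V j x)^2 with hW_def
  have hWmeas : ∀ j, Measurable (W j) := fun j => (hmeas j).pow_const 2
  have hWindep : iIndepFun W P :=
    hindep.comp (fun _ => fun y : ℝ => y^2) (fun _ => measurable_id.pow_const 2)
  have hWint : ∀ j, Integrable (fun ω => Real.exp ((1/4) * W j ω)) P := by
    intro j
    have hsm : AEStronglyMeasurable (fun x : ℝ => Real.exp ((1/4) * x^2))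
        (Measure.map (V j) P) :=
      (Real.measurable_exp.comp ((measurable_id.pow_const 2).const_mul _)).aestronglyMeasurable
    have h1 : Integrable (fun x : ℝ => Real.exp ((1/4) * x^2)) (Measure.map (V j) P) := by
      rw [hdist j]; exact aux_integrable_exp_quarter
    exact (integrable_map_measure hsm (hmeas j).aemeasurable).1 h1
  have hWmgf : ∀ j, mgf (W j) P (1/4) = Real.sqrt 2 := by
    intro j
    have hsm : AEStronglyMeasurable (fun x : ℝ => Real.exp ((1/4) * x^2))
        (Measure.map (V j) P) :=
      (Real.measurable_exp.comp ((measurable_id.pow_const 2).const_mul _)).aestronglyMeasurable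
    have h1 := integral_map (hmeas j).aemeasurable hsm
    rw [hdist j, aux_integral_exp_quarter] at h1
    rw [mgf, ← h1]
  -- choose N
  obtain ⟨N₀, hN₀⟩ := exists_nat_ge (4*(M + L)/K)
  refine ⟨max N₀ 1, fun n hn => ?_⟩
  have hn1 : 1 ≤ n := le_trans (le_max_right _ _) hn
  have hn0 : (0:ℝ) < n := by exact_mod_cast hn1
  have hnN : 4*(M + L)/K ≤ (n:ℝ) := by
    refine le_trans hN₀ ?_
    exact_mod_cast le_trans (le_max_left _ _) hn
  have hKn : 4*(M + L) ≤ K * n := by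
    rw [div_le_iff₀ hK] at hnN; linarith [hnN]
  -- set inclusion
  have hsub : {x | (n:ℝ) * ε ≤ ∑ j ∈ Finset.range n,
        |(n:ℝ) / c * Real.log |1 + c / (n:ℝ) * V j x| - V j x|}
      ⊆ {ω | K * (n:ℝ)^2 ≤ (∑ j ∈ Finset.range n, W j) ω} := by
    intro x hx
    simp only [Set.mem_setOf_eq, Finset.sum_apply] at hx ⊢
    by_cases hcase : ∃ j ∈ Finset.range n, (n:ℝ)/(2*c) ≤ |V j x|
    · obtain ⟨j, hj, hjbig⟩ := hcase
      have h1 : ((n:ℝ)/(2*c))^2 ≤ (V j x)^2 := by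
        rw [← sq_abs (V j x)]
        exact pow_le_pow_left₀ (by positivity) hjbig 2
      have h2 : (V j x)^2 ≤ ∑ i ∈ Finset.range n, W i x :=
        Finset.single_le_sum (fun i _ => sq_nonneg (V i x)) hj
      have h3 : K * (n:ℝ)^2 ≤ ((n:ℝ)/(2*c))^2 := by
        have hKle : K ≤ 1/(4*c^2) := min_le_right _ _
        have heq : ((n:ℝ)/(2*c))^2 = 1/(4*c^2) * (n:ℝ)^2 := by
          field_simp; ring
        rw [heq]
        nlinarith [sq_nonneg (n:ℝ)]
      linarith
    · push_neg at hcase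
      have hterm : ∀ j ∈ Finset.range n,
          |(n:ℝ)/c * Real.log |1 + c/(n:ℝ) * V j x| - V j x| ≤ 2*c/(n:ℝ) * (V j x)^2 := by
        intro j hj
        set y := c/(n:ℝ) * V j x with hy_def
        have hy : |y| < 1/2 := by
          rw [hy_def, abs_mul, abs_of_pos (div_pos hc hn0)]
          have h := hcase j hj
          calc c/(n:ℝ) * |V j x| < c/(n:ℝ) * ((n:ℝ)/(2*c)) :=
                mul_lt_mul_of_pos_left h (div_pos hc hn0)
            _ = 1/2 := by field_simp
        have hlog := aux_log_abs_bound hy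
        have hrew : (n:ℝ)/c * Real.log |1 + y| - V j x
            = (n:ℝ)/c * (Real.log |1 + y| - y) := by
          rw [hy_def]; field_simp
        rw [hrew, abs_mul, abs_of_pos (div_pos hn0 hc)]
        calc (n:ℝ)/c * |Real.log |1 + y| - y| ≤ (n:ℝ)/c * (2*y^2) :=
              mul_le_mul_of_nonneg_left hlog (by positivity)
          _ = 2*c/(n:ℝ) * (V j x)^2 := by rw [hy_def]; field_simp
      have hsum : (n:ℝ) * ε ≤ 2*c/(n:ℝ) * ∑ j ∈ Finset.range n, (V j x)^2 := by
        calc (n:ℝ) * ε ≤ ∑ j ∈ Finset.range n,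
              |(n:ℝ)/c * Real.log |1 + c/(n:ℝ) * V j x| - V j x| := hx
          _ ≤ ∑ j ∈ Finset.range n, 2*c/(n:ℝ) * (V j x)^2 := Finset.sum_le_sum hterm
          _ = 2*c/(n:ℝ) * ∑ j ∈ Finset.range n, (V j x)^2 := by
              rw [Finset.mul_sum]
      have hKle : K ≤ ε/(2*c) := min_le_left _ _
      have hS : ε/(2*c) * (n:ℝ)^2 ≤ ∑ j ∈ Finset.range n, (V j x)^2 := by
        have h2 := mul_le_mul_of_nonneg_left hsum (le_of_lt hn0)
        have hne : (n:ℝ) ≠ 0 := ne_of_gt hn0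
        rw [div_mul_eq_mul_div, div_le_iff₀ (by positivity : (0:ℝ) < 2*c)]
        have : (n:ℝ) * (2*c/(n:ℝ) * ∑ j ∈ Finset.range n, (V j x)^2)
            = (∑ j ∈ Finset.range n, (V j x)^2) * (2*c) := by
          field_simp
        rw [this] at h2
        nlinarith [h2]
      nlinarith [sq_nonneg (n:ℝ)]
  -- Chernoff bound
  have hint : Integrable (fun ω => Real.exp ((1/4) * (∑ j ∈ Finset.range n, W j) ω)) P :=
    hWindep.integrable_exp_mul_sum hWmeas (fun i _ => hWint i)
  have hchern := measure_ge_le_exp_mul_mgf (μ := P) (X := ∑ j ∈ Finset.range n, W j)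
    (K * (n:ℝ)^2) (by norm_num : (0:ℝ) ≤ 1/4) hint
  have hmgf_sum : mgf (∑ j ∈ Finset.range n, W j) P (1/4) = (Real.sqrt 2)^n := by
    rw [hWindep.mgf_sum hWmeas (Finset.range n)]
    rw [Finset.prod_congr rfl (fun j _ => hWmgf j), Finset.prod_const, Finset.card_range]
  rw [hmgf_sum] at hchern
  -- final estimate
  have hfinal : Real.exp (-(1/4) * (K * (n:ℝ)^2)) * (Real.sqrt 2)^n ≤ Real.exp (-M * n) := by
    have h2 : (Real.sqrt 2)^n = Real.exp ((n:ℝ) * L) := by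
      rw [hL_def, Real.exp_nat_mul, Real.exp_log (Real.sqrt_pos.2 (by norm_num))]
    rw [h2, ← Real.exp_add]
    apply Real.exp_le_exp.2
    nlinarith [mul_le_mul_of_nonneg_left hKn (le_of_lt hn0)]
  rw [ENNReal.le_ofReal_iff_toReal_le (measure_ne_top P _) (Real.exp_nonneg _)]
  calc (P _).toReal ≤ (P {ω | K * (n:ℝ)^2 ≤ (∑ j ∈ Finset.range n, W j) ω}).toReal := by
        apply ENNReal.toReal_mono (measure_ne_top P _)
        exact measure_mono hsub
    _ ≤ Real.exp (-(1/4) * (K * (n:ℝ)^2)) * (Real.sqrt 2)^n := hchern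
    _ ≤ Real.exp (-M * n) := hfinal
end
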